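/- Let (G, (q_i)) be the projective limit of a projective system of Hausdorff topological abelian groups (G_i, q_{ij}) such that each limit map q_i : G → G_i has dense image. Then every continuous character ξ : G → 𝕋 factors as ξ = θ ∘ q_i for some index i and some continuous character θ : G_i → 𝕋. -/

import Mathlib

open Real in
lemma aux_exists_cos_nonpos {θ : ℝ} (h0 : 0 < θ) (hθ : θ ≤ π) {n : ℕ} (hn : 1 ≤ n)
    (hbig : π / (2 * n) ≤ θ) : ∃ k : ℕ, 1 ≤ k ∧ k ≤ n ∧ Real.cos (k * θ) ≤ 0 := by
  have hπ := Real.pi_pos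
  rcases le_or_gt (π / 2) θ with hbig1 | hsm
  · exact ⟨1, le_refl _, hn, by
      simpa using Real.cos_nonpos_of_pi_div_two_le_of_le hbig1 (by linarith)⟩
  · set k : ℕ := ⌈(π / 2) / θ⌉₊ with hk
    have hd0 : 0 < (π / 2) / θ := by positivity
    have hk1 : 1 ≤ k := Nat.one_le_iff_ne_zero.mpr (by
      simp only [hk, ne_eq, Nat.ceil_eq_zero, not_le]; exact hd0)
    have hkle : (π / 2) / θ ≤ (k : ℝ) := Nat.le_ceil _
    have hnpos : (0:ℝ) < n := by exact_mod_cast Nat.lt_of_lt_of_le Nat.zero_lt_one hn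
    have hhalf : π / 2 ≤ (n : ℝ) * θ := by
      calc π / 2 = (n : ℝ) * (π / (2 * n)) := by field_simp
      _ ≤ (n : ℝ) * θ := by gcongr
    have hkn : k ≤ n := by
      rw [hk, Nat.ceil_le, div_le_iff₀ h0]
      linarith
    have h1 : π / 2 ≤ (k : ℝ) * θ := by
      rw [div_le_iff₀ h0] at hkle
      linarith
    have hup : (k : ℝ) < (π / 2) / θ + 1 := Nat.ceil_lt_add_one hd0.le
    have h2 : (k : ℝ) * θ < π / 2 + θ := by
      have := (mul_lt_mul_of_pos_right hup h0)
      rwa [add_mul, one_mul, div_mul_cancel₀ _ h0.ne'] at this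
    exact ⟨k, hk1, hkn, Real.cos_nonpos_of_pi_div_two_le_of_le h1 (by linarith)⟩

open Real in
lemma aux_abs_lt {θ : ℝ} (hθ : |θ| ≤ π) {n : ℕ} (hn : 1 ≤ n)
    (h : ∀ k : ℕ, 1 ≤ k → k ≤ n → 0 < Real.cos (k * θ)) : |θ| < π / (2 * n) := by
  by_contra hc
  push_neg at hc
  have hπ := Real.pi_pos
  have hnpos : (0:ℝ) < n := by exact_mod_cast Nat.lt_of_lt_of_le Nat.zero_lt_one hn
  have hne : θ ≠ 0 := by
    intro h0; rw [h0, abs_zero] at hc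
    have : (0:ℝ) < π / (2*n) := by positivity
    linarith
  rcases hne.lt_or_gt with hneg | hpos
  · have habs : |θ| = -θ := abs_of_neg hneg
    obtain ⟨k, hk1, hkn, hck⟩ := aux_exists_cos_nonpos (θ := -θ) (by linarith)
      (by rw [habs] at hθ; linarith) hn (by rwa [habs] at hc)
    have := h k hk1 hkn
    rw [mul_neg, Real.cos_neg] at hck
    linarith
  · obtain ⟨k, hk1, hkn, hck⟩ := aux_exists_cos_nonpos hpos
      (by rw [abs_of_pos hpos] at hθ; exact hθ) hn (by rwa [abs_of_pos hpos] at hc)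
    exact absurd (h k hk1 hkn) (not_lt.mpr hck)

open Real in
lemma aux_eq_zero {θ : ℝ} (hθ : |θ| ≤ π)
    (h : ∀ n : ℕ, 1 ≤ n → 0 < Real.cos (n * θ)) : θ = 0 := by
  by_contra hne
  have habs : 0 < |θ| := abs_pos.mpr hne
  obtain ⟨n, hngt⟩ := exists_nat_gt (π / (2 * |θ|))
  have hπ := Real.pi_pos
  have hn1 : 1 ≤ n := by
    by_contra hn0
    push_neg at hn0
    interval_cases n
    · simp at hngt; nlinarith [div_pos (by linarith : (0:ℝ) < π) (by linarith : (0:ℝ) < 2*|θ|)]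
  have := aux_abs_lt hθ hn1 (fun k hk1 _ => h k hk1)
  have hnpos : (0:ℝ) < n := by exact_mod_cast Nat.lt_of_lt_of_le Nat.zero_lt_one hn1
  rw [div_lt_iff₀ (by positivity)] at hngt
  rw [lt_div_iff₀ (by positivity)] at this
  nlinarith

lemma circle_coe_eq_exp (z : Circle) :
    (z : ℂ) = Complex.exp ((Complex.arg (z : ℂ) : ℂ) * Complex.I) := by
  conv_lhs => rw [← Complex.norm_mul_exp_arg_mul_I (z : ℂ)]
  rw [Circle.norm_coe, Complex.ofReal_one, one_mul]

lemma circle_re_pow (z : Circle) (k : ℕ) :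
    ((z ^ k : Circle) : ℂ).re = Real.cos (k * Complex.arg (z : ℂ)) := by
  have hcoe : ((z ^ k : Circle) : ℂ) = ((z : ℂ)) ^ k := by
    induction k with
    | zero => simp
    | succ m ih => rw [pow_succ, pow_succ, ← ih]; rfl
  have h1 : ((z ^ k : Circle) : ℂ) = Complex.exp (((k * Complex.arg (z:ℂ) : ℝ) : ℂ) * Complex.I) := by
    rw [hcoe]
    conv_lhs => rw [circle_coe_eq_exp z]
    rw [← Complex.exp_nat_mul]
    push_cast
    ring_nf
  rw [h1, Complex.exp_ofReal_mul_I_re]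

lemma circle_eq_one_of_re_pow_pos (z : Circle)
    (h : ∀ n : ℕ, 1 ≤ n → 0 < ((z ^ n : Circle) : ℂ).re) : z = 1 := by
  have harg : |Complex.arg (z:ℂ)| ≤ Real.pi :=
    abs_le.2 ⟨(Complex.neg_pi_lt_arg _).le, Complex.arg_le_pi _⟩
  have h0 : Complex.arg (z:ℂ) = 0 := by
    refine aux_eq_zero harg fun n hn => ?_
    rw [← circle_re_pow]; exact h n hn
  ext
  rw [circle_coe_eq_exp z, h0]
  simp

lemma circle_abs_sub_one_le (z : Circle) :
    ‖(z : ℂ) - 1‖ ≤ |Complex.arg (z : ℂ)| := by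
  set θ := Complex.arg (z : ℂ) with hθ
  have hre : (z : ℂ).re = Real.cos θ := by
    have := circle_re_pow z 1
    simpa using this
  have him : (z : ℂ).im = Real.sin θ := by
    rw [circle_coe_eq_exp z, ← hθ]
    simpa using Complex.exp_ofReal_mul_I_im θ
  have hsq : ‖(z : ℂ) - 1‖ ^ 2 = 2 - 2 * Real.cos θ := by
    rw [Complex.sq_norm, Complex.normSq_apply]
    simp only [Complex.sub_re, Complex.sub_im, Complex.one_re, Complex.one_im, hre, him]
    nlinarith [Real.sin_sq_add_cos_sq θ]
  have hcos : 1 - θ ^ 2 / 2 ≤ Real.cos θ := Real.one_sub_sq_div_two_le_cos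
  have h1 : ‖(z : ℂ) - 1‖ ^ 2 ≤ |θ| ^ 2 := by
    rw [hsq, sq_abs]; nlinarith
  have h2 : 0 ≤ ‖(z : ℂ) - 1‖ := norm_nonneg _
  nlinarith [abs_nonneg θ]



open Filter Topology in
/-- Let `(G, (q i))` be the projective limit of a projective system of Hausdorff
topological abelian groups `(G i, p)` (so the topology of `G` is the initial
topology with respect to the limit maps `q i`, which are compatible with the
bonding maps `p`), such that each `q i` has dense range. Then every continuous
character `ξ : G → 𝕋` factors as `ξ = θ ∘ q i` for some index `i` and some
continuous character `θ : G i → 𝕋`. -/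
theorem character_factors_through_projectiveLimit
    {I : Type*} [Preorder I] [IsDirected I (· ≤ ·)] [Nonempty I]
    (G : I → Type*) [∀ i, CommGroup (G i)] [∀ i, TopologicalSpace (G i)]
    [∀ i, IsTopologicalGroup (G i)] [∀ i, T2Space (G i)]
    (p : ∀ i j, i ≤ j → G j →* G i)
    (hp_cont : ∀ i j (h : i ≤ j), Continuous (p i j h))
    {L : Type*} [CommGroup L] [tL : TopologicalSpace L] [IsTopologicalGroup L]
    (q : ∀ i, L →* G i)
    (hq_compat : ∀ i j (h : i ≤ j), (p i j h).comp (q j) = q i)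
    (hq_dense : ∀ i, DenseRange (q i))
    (hinit : tL = ⨅ i, TopologicalSpace.induced (q i) inferInstance)
    (ξ : L →* Circle) (hξ : Continuous ξ) :
    ∃ (i : I) (θ : G i →* Circle), Continuous θ ∧ ∀ x : L, ξ x = θ (q i x) := by
  -- the open set of elements of the circle with positive real part
  set V : Set Circle := {z : Circle | 0 < (z : ℂ).re} with hV
  have hVopen : IsOpen V := isOpen_lt continuous_const (Complex.continuous_re.comp continuous_subtype_val)
  have h1V : (1 : Circle) ∈ V := by simp [hV]
  have hmem : ξ ⁻¹' V ∈ 𝓝 (1 : L) := by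
    have : V ∈ 𝓝 (ξ 1) := by rw [map_one]; exact hVopen.mem_nhds h1V
    exact hξ.continuousAt.preimage_mem_nhds this
  -- directedness of the family of induced topologies
  have hdir : Directed (· ≥ ·)
      (fun i => @nhds L (TopologicalSpace.induced (q i) inferInstance) 1) := by
    intro i j
    obtain ⟨k, hik, hjk⟩ := directed_of (· ≤ ·) i j
    have key : ∀ a, ∀ (h : a ≤ k),
        (TopologicalSpace.induced (q k) inferInstance : TopologicalSpace L) ≤
          TopologicalSpace.induced (q a) inferInstance := by
      intro a h
      have hfun : ⇑(q a) = ⇑(p a k h) ∘ ⇑(q k) := by rw [← hq_compat a k h]; rfl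
      rw [hfun, ← induced_compose]
      exact induced_mono (continuous_iff_le_induced.mp (hp_cont a k h))
    exact ⟨k, nhds_mono (key i hik), nhds_mono (key j hjk)⟩
  rw [hinit] at hmem
  rw [_root_.nhds_iInf] at hmem
  rw [Filter.mem_iInf_of_directed hdir] at hmem
  obtain ⟨i, hi⟩ := hmem
  rw [nhds_induced, map_one, Filter.mem_comap] at hi
  obtain ⟨U, hU, hUsub⟩ := hi
  -- the kernel of `q i` is contained in the kernel of `ξ`
  have hker : ∀ x : L, q i x = 1 → ξ x = 1 := by
    intro x hx
    refine circle_eq_one_of_re_pow_pos _ fun n _ => ?_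
    have hqn : q i (x ^ n) = 1 := by rw [map_pow, hx, one_pow]
    have : x ^ n ∈ ξ ⁻¹' V := hUsub (by rw [Set.mem_preimage, hqn]; exact mem_of_mem_nhds hU)
    rw [Set.mem_preimage, map_pow] at this
    exact this
  -- the dense subgroup
  set H : Subgroup (G i) := (q i).range with hHdef
  have hmemH : ∀ h : H, ∃ x : L, q i x = (h : G i) := fun h => h.2
  set sec : H → L := fun h => (hmemH h).choose with hsec_def
  have hsec : ∀ h : H, q i (sec h) = (h : G i) := fun h => (hmemH h).choose_spec
  have hwd : ∀ (x : L) (h : H), q i x = (h : G i) → ξ x = ξ (sec h) := by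
    intro x h hx
    have hdiv : q i (x / sec h) = 1 := by rw [map_div, hx, hsec, div_self']
    have := hker _ hdiv
    rw [map_div, div_eq_one] at this
    exact this
  set f0 : H → Circle := fun h => ξ (sec h) with hf0_def
  have hf0mul : ∀ a b : H, f0 (a * b) = f0 a * f0 b := by
    intro a b
    have hq' : q i (sec a * sec b) = ((a * b : H) : G i) := by
      rw [map_mul, hsec, hsec]; rfl
    have := hwd _ _ hq'
    rw [map_mul] at this
    exact this.symm
  set f : H →* Circle := MonoidHom.mk' f0 hf0mul with hf_def
  have hf_eval : ∀ (x : L) (h : H), q i x = (h : G i) → f h = ξ x := by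
    intro x h hx
    exact (hwd x h hx).symm
  -- continuity of `f` at 1
  have hf1 : f 1 = 1 := map_one f
  have hUsub' : ∀ x : L, q i x ∈ U → (0:ℝ) < ((ξ x : Circle) : ℂ).re :=
    fun x hx => hUsub hx
  have hcont1 : ContinuousAt f (1 : H) := by
    rw [ContinuousAt, hf1, Metric.tendsto_nhds]
    intro ε hε
    have hπ := Real.pi_pos
    obtain ⟨n, hn⟩ := exists_nat_gt (Real.pi / (2 * ε))
    have hn1 : 1 ≤ n := by
      by_contra hn0
      push_neg at hn0
      interval_cases n
      · simp at hn
        nlinarith [div_pos hπ (by linarith : (0:ℝ) < 2 * ε)]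
    have hnpos : (0:ℝ) < n := by exact_mod_cast Nat.lt_of_lt_of_le Nat.zero_lt_one hn1
    have hsmall : Real.pi / (2 * n) < ε := by
      rw [div_lt_iff₀ (by positivity)]
      rw [div_lt_iff₀ (by positivity)] at hn
      nlinarith
    -- an open neighborhood inside U
    obtain ⟨U', hU'sub, hU'open, hU'mem⟩ := mem_nhds_iff.mp hU
    set W : Set (G i) := ⋂ k ∈ Finset.Icc 1 n, (fun g : G i => g ^ k) ⁻¹' U' with hW_def
    have hWopen : IsOpen W := isOpen_biInter_finset fun k _ => (continuous_pow k).isOpen_preimage U' hU'open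
    have hWmem : (1 : G i) ∈ W := by
      simp only [hW_def, Set.mem_iInter]
      intro k _
      simpa using hU'mem
    have hWnhds : {h : H | (h : G i) ∈ W} ∈ 𝓝 (1 : H) := by
      have : ((1 : H) : G i) ∈ W := hWmem
      exact continuous_subtype_val.continuousAt.preimage_mem_nhds (hWopen.mem_nhds this)
    filter_upwards [hWnhds] with h hh
    obtain ⟨x, hx⟩ := hmemH h
    have hfx : f h = ξ x := hf_eval x h hx
    have hpow : ∀ k : ℕ, 1 ≤ k → k ≤ n → 0 < (((ξ x) ^ k : Circle) : ℂ).re := by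
      intro k hk1 hkn
      have hUk : (h : G i) ^ k ∈ U' := by
        have := Set.mem_iInter₂.mp hh k (Finset.mem_Icc.mpr ⟨hk1, hkn⟩)
        exact this
      have : q i (x ^ k) ∈ U := by
        rw [map_pow, hx]; exact hU'sub hUk
      have := hUsub' _ this
      rwa [map_pow] at this
    have harg : |Complex.arg ((ξ x : Circle) : ℂ)| < Real.pi / (2 * n) := by
      have hbd : |Complex.arg ((ξ x : Circle) : ℂ)| ≤ Real.pi :=
        abs_le.2 ⟨(Complex.neg_pi_lt_arg _).le, Complex.arg_le_pi _⟩
      refine aux_abs_lt hbd hn1 fun k hk1 hkn => ?_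
      rw [← circle_re_pow]
      exact hpow k hk1 hkn
    have hchord := circle_abs_sub_one_le (ξ x)
    rw [hfx]
    change dist ((ξ x : Circle) : ℂ) ((1 : Circle) : ℂ) < ε
    rw [Complex.dist_eq]
    calc ‖((ξ x : Circle) : ℂ) - ((1 : Circle) : ℂ)‖ ≤ |Complex.arg ((ξ x : Circle) : ℂ)| := by
          simpa using hchord
      _ < Real.pi / (2 * n) := harg
      _ < ε := hsmall
  -- uniform space structures
  letI uG : UniformSpace (G i) := IsTopologicalGroup.rightUniformSpace (G i)
  letI : IsUniformGroup (G i) := isUniformGroup_of_commGroup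
  have hUC : UniformContinuous f := f.uniformContinuous_of_continuousAt_one hcont1
  -- the inclusion of H into G i
  have hui : IsUniformInducing ((↑) : H → G i) := isUniformEmbedding_subtype_val.isUniformInducing
  have hdr : DenseRange ((↑) : H → G i) := by
    apply denseRange_subtype_val.mpr
    have : {x | x ∈ H} = Set.range (q i) := by
      ext g; exact MonoidHom.mem_range
    rw [this]
    exact hq_dense i
  have hdi : IsDenseInducing ((↑) : H → G i) := hui.isDenseInducing hdr
  set ψ : G i → Circle := hdi.extend f with hψ_def
  have hψUC : UniformContinuous ψ := uniformContinuous_uniformly_extend hui hdr hUC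
  have hψcont : Continuous ψ := hψUC.continuous
  have hψeq : ∀ h : H, ψ (h : G i) = f h := fun h =>
    uniformly_extend_of_ind hui hdr hUC h
  have hψmul : ∀ a b : G i, ψ (a * b) = ψ a * ψ b := by
    have hclosed : IsClosed {r : G i × G i | ψ (r.1 * r.2) = ψ r.1 * ψ r.2} :=
      isClosed_eq (hψcont.comp continuous_mul)
        ((hψcont.comp continuous_fst).mul (hψcont.comp continuous_snd))
    intro a b
    refine DenseRange.induction_on₂ hdr ?_ (fun a' b' => ?_) a b
    · exact hclosed
    · show ψ ((a' : G i) * (b' : G i)) = ψ a' * ψ b'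
      have : ((a' * b' : H) : G i) = (a' : G i) * (b' : G i) := rfl
      rw [← this, hψeq, hψeq, hψeq, map_mul]
  refine ⟨i, MonoidHom.mk' ψ hψmul, hψcont, fun x => ?_⟩
  show ξ x = ψ (q i x)
  have hmem' : q i x ∈ H := ⟨x, rfl⟩
  have : ψ (q i x) = f ⟨q i x, hmem'⟩ := hψeq ⟨q i x, hmem'⟩
  rw [this, hf_eval x ⟨q i x, hmem'⟩ rfl]
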